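/- Let l be a field, k a subfield of l, C a commutative k-algebra of finite type, A a commutative l-algebra of finite type, and φ : C → A a k-algebra homomorphism. Then there exist an intermediate field m with k ⊆ m ⊆ l, finitely generated as a field extension of k, a finite type m-algebra B, a k-algebra homomorphism ψ : C → B, and an isomorphism of l-algebras Θ : l ⊗_m B ≅ A such that for every c ∈ C one has Θ(1 ⊗ ψ(c)) = φ(c). -/

import Mathlib

open TensorProduct
set_option synthInstance.maxHeartbeats 800000
set_option maxHeartbeats 1600000

lemma exists_mvPolynomial_map_preimage {σ R S : Type*} [CommSemiring R] [CommSemiring S]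
    (f : R →+* S) (p : MvPolynomial σ S) (h : ∀ d, p.coeff d ∈ Set.range ⇑f) :
    ∃ q : MvPolynomial σ R, MvPolynomial.map f q = p := by
  classical
  choose g hg using h
  refine ⟨∑ d ∈ p.support, MvPolynomial.monomial d (g d), ?_⟩
  rw [map_sum]
  simp_rw [MvPolynomial.map_monomial, hg]
  exact MvPolynomial.support_sum_monomial_coeff p

theorem descend_algHom_to_finitely_generated_subextension
    {k l : Type} [Field k] [Field l] [Algebra k l]
    (C : Type) [CommRing C] [Algebra k C] [Algebra.FiniteType k C]
    (A : Type) [CommRing A] [Algebra l A] [Algebra.FiniteType l A]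
    [Algebra k A] [IsScalarTower k l A]
    (φ : C →ₐ[k] A) :
    ∃ m : IntermediateField k l, m.FG ∧
      ∃ (B : Type) (cB : CommRing B),
        letI : CommRing B := cB
        ∃ aB : Algebra m B,
          letI : Algebra m B := aB
          Algebra.FiniteType m B ∧
            (letI : Algebra k B := ((algebraMap m B).comp (algebraMap k m)).toAlgebra
             ∃ (ψ : C →ₐ[k] B) (Θ : (l ⊗[m] B) ≃ₐ[l] A),
               ∀ c : C, Θ (1 ⊗ₜ ψ c) = φ c) := by
  classical
  obtain ⟨n, p, hp⟩ :=
    (Algebra.FiniteType.iff_quotient_mvPolynomial'').mp (inferInstance : Algebra.FiniteType l A)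
  set I : Ideal (MvPolynomial (Fin n) l) := RingHom.ker p with hIdef
  obtain ⟨T, hT⟩ : I.FG := IsNoetherian.noetherian I
  obtain ⟨s, hs⟩ : (⊤ : Subalgebra k C).FG := (inferInstance : Algebra.FiniteType k C).out
  choose q hq using fun c : C => hp (φ c)
  set E : Finset l := T.sup MvPolynomial.coeffs ∪ s.sup (fun c => (q c).coeffs) with hEdef
  set m : IntermediateField k l := IntermediateField.adjoin k (E : Set l) with hmdef
  -- coefficients of the chosen polynomials lie in `m`
  have hmemE : ∀ x ∈ E, x ∈ Set.range ⇑(algebraMap m l) := by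
    intro x hx
    exact ⟨⟨x, IntermediateField.subset_adjoin k _ hx⟩, rfl⟩
  have hTc : ∀ t ∈ T, ∀ d, t.coeff d ∈ Set.range ⇑(algebraMap m l) := by
    intro t ht d
    by_cases h0 : t.coeff d = 0
    · exact ⟨0, by simp [h0]⟩
    · exact hmemE _ (Finset.mem_union_left _
        (Finset.le_sup (f := MvPolynomial.coeffs) ht (MvPolynomial.coeff_mem_coeffs d h0)))
  have hqc : ∀ c ∈ s, ∀ d, (q c).coeff d ∈ Set.range ⇑(algebraMap m l) := by
    intro c hc d
    by_cases h0 : (q c).coeff d = 0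
    · exact ⟨0, by simp [h0]⟩
    · exact hmemE _ (Finset.mem_union_right _
        (Finset.le_sup (f := fun c => (q c).coeffs) hc (MvPolynomial.coeff_mem_coeffs d h0)))
  set mapm : MvPolynomial (Fin n) m →+* MvPolynomial (Fin n) l :=
    (MvPolynomial.map (algebraMap m l)) with hmapm
  set J : Ideal (MvPolynomial (Fin n) m) := Ideal.span (⇑mapm ⁻¹' ↑T) with hJdef
  set B := MvPolynomial (Fin n) m ⧸ J with hBdef
  letI : CommRing B := inferInstanceAs (CommRing (MvPolynomial (Fin n) m ⧸ J))
  letI : Algebra m B := inferInstanceAs (Algebra m (MvPolynomial (Fin n) m ⧸ J))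
  refine ⟨m, ⟨E, rfl⟩, B, inferInstance, inferInstance, ?_, ?_⟩
  · exact Algebra.FiniteType.of_surjective
      (Ideal.Quotient.mkₐ m J)
      (Ideal.Quotient.mkₐ_surjective m J)
  letI : Algebra k B := ((algebraMap m B).comp (algebraMap k m)).toAlgebra
  have hkmA : ∀ x : k, algebraMap m A (algebraMap k m x) = algebraMap k A x := by
    intro x
    rw [IsScalarTower.algebraMap_apply m l A, ← IsScalarTower.algebraMap_apply k m l,
      ← IsScalarTower.algebraMap_apply k l A]
  set Q : MvPolynomial (Fin n) m →ₐ[m] B := Ideal.Quotient.mkₐ m J with hQdef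
  set π : MvPolynomial (Fin n) m →ₐ[m] A :=
    (p.restrictScalars m).comp (MvPolynomial.mapAlgHom (Algebra.ofId m l)) with hπdef
  have hπmap : ∀ f : MvPolynomial (Fin n) m, π f = p (mapm f) := fun f => rfl
  have hJle : ∀ a ∈ J, π a = 0 := by
    have hle : J ≤ RingHom.ker (π : MvPolynomial (Fin n) m →+* A) := by
      rw [hJdef, Ideal.span_le]
      intro x hx
      have hxI : mapm x ∈ I := hT ▸ Ideal.subset_span hx
      have hπx : π x = 0 := by rw [hπmap]; exact hxI
      simp only [SetLike.mem_coe, RingHom.mem_ker]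
      exact hπx
    intro a ha
    exact RingHom.mem_ker.mp (hle ha)
  set g : B →ₐ[m] A := Ideal.Quotient.liftₐ J π hJle with hgdef
  have hgQ : ∀ f, g (Q f) = π f := by
    intro f
    exact DFunLike.congr_fun (Ideal.Quotient.liftₐ_comp J π hJle) f
  set G : l ⊗[m] B →ₐ[l] A :=
    Algebra.TensorProduct.lift (Algebra.ofId l A) g (fun x y => Commute.all _ _) with hGdef
  have hGtmul : ∀ b : B, G (1 ⊗ₜ b) = g b := by
    intro b
    simp [hGdef, Algebra.TensorProduct.lift_tmul]
  set F : MvPolynomial (Fin n) l →ₐ[l] l ⊗[m] B :=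
    MvPolynomial.aeval (fun i => (1 ⊗ₜ Q (MvPolynomial.X i) : l ⊗[m] B)) with hFdef
  have hFmap : ∀ f : MvPolynomial (Fin n) m, F (mapm f) = 1 ⊗ₜ Q f := by
    intro f
    have h1 : F (mapm f) =
        MvPolynomial.aeval (R := m) (fun i => (1 ⊗ₜ Q (MvPolynomial.X i) : l ⊗[m] B)) f := by
      rw [hFdef, hmapm]
      exact MvPolynomial.aeval_map_algebraMap l _ f
    have h2 : ((Algebra.TensorProduct.includeRight.comp Q :
          MvPolynomial (Fin n) m →ₐ[m] l ⊗[m] B)) =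
        MvPolynomial.aeval (fun i => (1 ⊗ₜ Q (MvPolynomial.X i) : l ⊗[m] B)) := by
      apply MvPolynomial.algHom_ext
      intro i
      simp
    rw [h1]
    exact (DFunLike.congr_fun h2 f).symm
  have hFI : ∀ a ∈ I, F a = 0 := by
    have hle : I ≤ RingHom.ker (F : MvPolynomial (Fin n) l →+* l ⊗[m] B) := by
      rw [← hT, Ideal.span_le]
      intro t ht
      obtain ⟨u, hu⟩ := exists_mvPolynomial_map_preimage (algebraMap m l) t (hTc t ht)
      have huJ : u ∈ J := Ideal.subset_span (by simpa [hmapm, hu] using ht)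
      have hQu : Q u = 0 := Ideal.Quotient.eq_zero_iff_mem.mpr huJ
      have hFt : F t = 1 ⊗ₜ Q u := by rw [← hu]; exact hFmap u
      have hFt0 : F t = 0 := by rw [hFt, hQu, TensorProduct.tmul_zero]
      simp only [SetLike.mem_coe, RingHom.mem_ker]
      exact hFt0
    intro a ha
    exact RingHom.mem_ker.mp (hle ha)
  set pbar : (MvPolynomial (Fin n) l ⧸ I) ≃ₐ[l] A :=
    Ideal.quotientKerAlgEquivOfSurjective hp with hpbardef
  have hpbar : ∀ f, pbar (Ideal.Quotient.mk I f) = p f := by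
    intro f
    rw [hpbardef]
    exact Ideal.quotientKerAlgEquivOfSurjective_mk hp f
  set F' : (MvPolynomial (Fin n) l ⧸ I) →ₐ[l] l ⊗[m] B := Ideal.Quotient.liftₐ I F hFI
    with hF'def
  have hF'mk : ∀ f, F' (Ideal.Quotient.mk I f) = F f := by
    intro f
    simp [hF'def, Ideal.Quotient.liftₐ_apply, Ideal.Quotient.lift_mk]
    exact Ideal.Quotient.lift_mk I (F : MvPolynomial (Fin n) l →+* l ⊗[m] B) hFI
  have hGF : ∀ f, G (F f) = p f := by
    have : G.comp F = p := by
      apply MvPolynomial.algHom_ext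
      intro i
      simp only [AlgHom.comp_apply, hFdef, MvPolynomial.aeval_X]
      rw [hGtmul, hgQ, hπmap]
      simp [hmapm]
    intro f
    exact DFunLike.congr_fun this f
  have hsymm : ∀ f, pbar.symm (p f) = Ideal.Quotient.mk I f := by
    intro f
    rw [← hpbar, AlgEquiv.symm_apply_apply]
  have h1 : G.comp (F'.comp pbar.symm.toAlgHom) = AlgHom.id l A := by
    apply AlgHom.ext
    intro a
    obtain ⟨f, rfl⟩ := hp a
    simp only [AlgHom.comp_apply, AlgHom.id_apply, AlgEquiv.toAlgHom_eq_coe,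
      AlgHom.coe_coe, AlgEquiv.coe_algHom]
    rw [hsymm, hF'mk, hGF]
  have h2 : (F'.comp pbar.symm.toAlgHom).comp G = AlgHom.id l (l ⊗[m] B) := by
    apply Algebra.TensorProduct.ext
    · apply AlgHom.ext
      intro x
      have hx : x = algebraMap l l x := (Algebra.algebraMap_self_apply x).symm
      rw [hx]
      simp only [AlgHom.comp_apply, AlgHom.commutes]
    · apply Ideal.Quotient.algHom_ext
      apply MvPolynomial.algHom_ext
      intro i
      simp only [AlgHom.comp_apply, AlgHom.coe_restrictScalars',
        Algebra.TensorProduct.includeRight_apply, Ideal.Quotient.mkₐ_eq_mk]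
      have hQX : (Ideal.Quotient.mk J) (MvPolynomial.X i) = Q (MvPolynomial.X i) := rfl
      rw [hQX, hGtmul, hgQ, hπmap]
      have : mapm (MvPolynomial.X i) = MvPolynomial.X i := by simp [hmapm]
      rw [this]
      simp only [AlgEquiv.toAlgHom_eq_coe, AlgHom.coe_coe, AlgHom.id_apply, AlgEquiv.coe_algHom]
      rw [hsymm, hF'mk]
      simp [hFdef]
  set Θ : (l ⊗[m] B) ≃ₐ[l] A := AlgEquiv.ofAlgHom G (F'.comp pbar.symm.toAlgHom) h1 h2
    with hΘdef
  have hΘ : ∀ x, Θ x = G x := fun x => rfl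
  -- injectivity of b ↦ 1 ⊗ b
  obtain ⟨t, ht⟩ := LinearMap.exists_leftInverse_of_injective (Algebra.linearMap m l)
    (LinearMap.ker_eq_bot.mpr (by
      intro x y hxy
      exact (algebraMap m l).injective hxy))
  have ht1 : t 1 = 1 := by
    have := DFunLike.congr_fun ht (1 : m)
    simpa using this
  have hincl : Function.Injective (fun b : B => (1 ⊗ₜ b : l ⊗[m] B)) := by
    intro x y hxy
    have := congrArg (fun z => (TensorProduct.lid m B) ((LinearMap.rTensor B t) z)) hxy
    simpa [LinearMap.rTensor_tmul, ht1] using this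
  have hg_inj : Function.Injective g := by
    intro x y hxy
    apply hincl
    apply Θ.injective
    rw [hΘ, hΘ, hGtmul, hGtmul, hxy]
  set h : B →ₐ[k] A :=
    { toRingHom := (g : B →+* A),
      commutes' := fun x => by
        have hx : algebraMap k B x = algebraMap m B (algebraMap k m x) := rfl
        show g (algebraMap k B x) = algebraMap k A x
        rw [hx, g.commutes, hkmA] } with hhdef
  have hh : ∀ b, h b = g b := fun b => rfl
  have hh_inj : Function.Injective h := hg_inj
  have hmem : ∀ c : C, φ c ∈ h.range := by
    have key : (⊤ : Subalgebra k C) ≤ h.range.comap φ := by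
      rw [← hs]
      apply Algebra.adjoin_le
      intro c hc
      show φ c ∈ h.range
      obtain ⟨u, hu⟩ := exists_mvPolynomial_map_preimage (algebraMap m l) (q c) (hqc c hc)
      refine ⟨Q u, ?_⟩
      show h (Q u) = φ c
      rw [hh, hgQ, hπmap]
      rw [show mapm u = q c from hu]
      exact hq c
    intro c
    exact key (by trivial)
  set e : B ≃ₐ[k] h.range := AlgEquiv.ofInjective h hh_inj with hedef
  have he : ∀ x : h.range, h (e.symm x) = x := by
    intro x
    have : e (e.symm x) = x := e.apply_symm_apply x
    calc h (e.symm x) = (e (e.symm x) : A) := by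
          rw [hedef]; rfl
      _ = x := by rw [this]
  refine ⟨(e.symm : h.range →ₐ[k] B).comp (φ.codRestrict h.range hmem), Θ, ?_⟩
  intro c
  rw [hΘ, hGtmul]
  have : g ((e.symm : h.range →ₐ[k] B) ((φ.codRestrict h.range hmem) c)) =
      h (e.symm ((φ.codRestrict h.range hmem) c)) := rfl
  rw [AlgHom.comp_apply, this, he]
  rfl
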